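/- Let 𝒜 : ℝ^{m×n} → ℝ^p be linear with δ_{2k}(𝒜) < 1, and suppose X₀ satisfies 𝒜(X₀) = b ≠ 0 with rank(X₀) ≤ k. Then X₀ is the unique minimizer of X ↦ ‖X‖_{k,2}^⋆ − ‖X‖_F over { X : 𝒜(X) = b }. -/

import Mathlib

open Matrix

theorem Matrix.isHermitian_transpose_mul_self {m n : Type*} [Fintype m] (A : Matrix m n ℝ) :
    (Aᵀ * A).IsHermitian := by
  simpa using Matrix.isHermitian_conjTranspose_mul_self A

/-- Singular values of a real `m × n` matrix, sorted in decreasing order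
(indexed by `Fin n`; `σ i = sqrt` of the `i`-th largest eigenvalue of `Aᵀ * A`). -/
noncomputable def svalsDesc {m n : ℕ} (A : Matrix (Fin m) (Fin n) ℝ) : Fin n → ℝ :=
  fun i =>
    Real.sqrt
      (((Matrix.isHermitian_transpose_mul_self A).eigenvalues ∘
        Tuple.sort (Matrix.isHermitian_transpose_mul_self A).eigenvalues) i.rev)

/-- Ky Fan 2-k-norm: `(∑_{i=1}^k σ_i(A)²)^{1/2}`. -/
noncomputable def kyFan2 {m n : ℕ} (k : ℕ) (A : Matrix (Fin m) (Fin n) ℝ) : ℝ :=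
  Real.sqrt (∑ i ∈ Finset.univ.filter (fun i : Fin n => (i : ℕ) < k), (svalsDesc A i) ^ 2)

/-- Frobenius inner product `⟨A, B⟩ = trace (Aᵀ B)`. -/
noncomputable def frobInner {m n : ℕ} (A B : Matrix (Fin m) (Fin n) ℝ) : ℝ :=
  ∑ i, ∑ j, A i j * B i j

/-- Frobenius norm. -/
noncomputable def frobNorm {m n : ℕ} (A : Matrix (Fin m) (Fin n) ℝ) : ℝ :=
  Real.sqrt (∑ i, ∑ j, (A i j) ^ 2)

/-- Dual Ky Fan 2-k-norm `‖A‖_{k,2}^⋆ = max {⟨A,X⟩ : ‖X‖_{k,2} ≤ 1}`. -/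
noncomputable def kyFan2Dual {m n : ℕ} (k : ℕ) (A : Matrix (Fin m) (Fin n) ℝ) : ℝ :=
  sSup {c : ℝ | ∃ X : Matrix (Fin m) (Fin n) ℝ, kyFan2 k X ≤ 1 ∧ c = frobInner A X}

/-- The linear map `𝒜` satisfies the restricted isometry inequality with constant `δ`
for all matrices of rank at most `r`. -/
def HasRIP {m n p : ℕ} (𝒜 : Matrix (Fin m) (Fin n) ℝ →ₗ[ℝ] EuclideanSpace ℝ (Fin p))
    (r : ℕ) (δ : ℝ) : Prop :=
  ∀ X : Matrix (Fin m) (Fin n) ℝ, X.rank ≤ r →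
    (1 - δ) * frobNorm X ≤ ‖𝒜 X‖ ∧ ‖𝒜 X‖ ≤ (1 + δ) * frobNorm X

namespace KFAux


variable {m n k : ℕ}

noncomputable def eig (A : Matrix (Fin m) (Fin n) ℝ) : Fin n → ℝ :=
  (Matrix.isHermitian_transpose_mul_self A).eigenvalues

noncomputable def sortedEig (A : Matrix (Fin m) (Fin n) ℝ) : Fin n → ℝ :=
  eig A ∘ Tuple.sort (eig A)

lemma svalsDesc_eq (A : Matrix (Fin m) (Fin n) ℝ) (i : Fin n) :
    svalsDesc A i = Real.sqrt (sortedEig A i.rev) := rfl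

lemma eig_nonneg (A : Matrix (Fin m) (Fin n) ℝ) (j : Fin n) : 0 ≤ eig A j :=
  Matrix.eigenvalues_conjTranspose_mul_self_nonneg A j

lemma sortedEig_nonneg (A : Matrix (Fin m) (Fin n) ℝ) (j : Fin n) : 0 ≤ sortedEig A j :=
  eig_nonneg A _

lemma sortedEig_mono (A : Matrix (Fin m) (Fin n) ℝ) : Monotone (sortedEig A) :=
  Tuple.monotone_sort (eig A)

lemma svalsDesc_nonneg (A : Matrix (Fin m) (Fin n) ℝ) (i : Fin n) : 0 ≤ svalsDesc A i :=
  Real.sqrt_nonneg _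

lemma svalsDesc_sq (A : Matrix (Fin m) (Fin n) ℝ) (i : Fin n) :
    svalsDesc A i ^ 2 = sortedEig A i.rev :=
  Real.sq_sqrt (sortedEig_nonneg A _)

lemma sum_eig (A : Matrix (Fin m) (Fin n) ℝ) : ∑ j, eig A j = ∑ i, ∑ j, A i j ^ 2 := by
  have hA := Matrix.isHermitian_transpose_mul_self A
  have h1 : (Aᴴ * A).trace = ∑ j, eig A j := by
    conv_lhs => rw [Matrix.conjTranspose_eq_transpose_of_trivial, hA.spectral_theorem, Unitary.conjStarAlgAut_apply]
    rw [Matrix.trace_mul_comm, ← Matrix.mul_assoc, Unitary.coe_star_mul_self, Matrix.one_mul,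
      Matrix.trace_diagonal]
    simp [eig]
  have h2 : (Aᴴ * A).trace = ∑ i, ∑ j, A i j ^ 2 := by
    rw [Matrix.trace]
    rw [Finset.sum_comm]
    congr 1; ext j
    simp [Matrix.diag, Matrix.mul_apply, Matrix.conjTranspose_apply, pow_two]
  rw [← h1, h2]

lemma sum_sortedEig (A : Matrix (Fin m) (Fin n) ℝ) : ∑ j, sortedEig A j = ∑ j, eig A j :=
  Equiv.sum_comp (Tuple.sort (eig A)) (eig A)

lemma sum_svalsDesc_sq (A : Matrix (Fin m) (Fin n) ℝ) :
    ∑ i, svalsDesc A i ^ 2 = ∑ i, ∑ j, A i j ^ 2 := by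
  simp_rw [svalsDesc_sq]
  have : ∑ i : Fin n, sortedEig A i.rev = ∑ i, sortedEig A i := by
    have := Equiv.sum_comp (Fin.revPerm (n := n)) (sortedEig A)
    simpa using this
  rw [this, sum_sortedEig, sum_eig]

lemma frobNorm_nonneg (A : Matrix (Fin m) (Fin n) ℝ) : 0 ≤ frobNorm A := Real.sqrt_nonneg _

lemma frobNorm_sq (A : Matrix (Fin m) (Fin n) ℝ) :
    frobNorm A ^ 2 = ∑ i, ∑ j, A i j ^ 2 :=
  Real.sq_sqrt (Finset.sum_nonneg fun _ _ => Finset.sum_nonneg fun _ _ => sq_nonneg _)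

lemma frobNorm_eq_zero {A : Matrix (Fin m) (Fin n) ℝ} (h : frobNorm A = 0) : A = 0 := by
  have h2 : ∑ i, ∑ j, A i j ^ 2 = 0 := by
    have := frobNorm_sq A
    rw [h] at this; simpa using this.symm
  ext i j
  have hnn : ∀ i ∈ Finset.univ, (0:ℝ) ≤ ∑ j, A i j ^ 2 :=
    fun _ _ => Finset.sum_nonneg fun _ _ => sq_nonneg _
  have hi := (Finset.sum_eq_zero_iff_of_nonneg hnn).mp h2 i (Finset.mem_univ i)
  have hj := (Finset.sum_eq_zero_iff_of_nonneg (fun _ _ => sq_nonneg _)).mp hi j (Finset.mem_univ j)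
  simpa using pow_eq_zero_iff (n := 2) (by norm_num) |>.mp hj

lemma frobNorm_pos {A : Matrix (Fin m) (Fin n) ℝ} (h : A ≠ 0) : 0 < frobNorm A := by
  rcases lt_or_eq_of_le (frobNorm_nonneg A) with h1 | h1
  · exact h1
  · exact absurd (frobNorm_eq_zero h1.symm) h

lemma kyFan2_nonneg (k : ℕ) (A : Matrix (Fin m) (Fin n) ℝ) : 0 ≤ kyFan2 k A :=
  Real.sqrt_nonneg _

lemma kyFan2_sq (k : ℕ) (A : Matrix (Fin m) (Fin n) ℝ) :
    kyFan2 k A ^ 2 = ∑ i ∈ Finset.univ.filter (fun i : Fin n => (i : ℕ) < k), svalsDesc A i ^ 2 :=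
  Real.sq_sqrt (Finset.sum_nonneg fun _ _ => sq_nonneg _)

lemma kyFan2_le_frobNorm (k : ℕ) (A : Matrix (Fin m) (Fin n) ℝ) : kyFan2 k A ≤ frobNorm A := by
  rw [kyFan2, frobNorm]
  apply Real.sqrt_le_sqrt
  calc ∑ i ∈ Finset.univ.filter (fun i : Fin n => (i : ℕ) < k), svalsDesc A i ^ 2
      ≤ ∑ i, svalsDesc A i ^ 2 :=
        Finset.sum_le_sum_of_subset_of_nonneg (Finset.filter_subset _ _)
          (fun _ _ _ => sq_nonneg _)
    _ = ∑ i, ∑ j, A i j ^ 2 := sum_svalsDesc_sq A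


lemma eig_le_max (A : Matrix (Fin m) (Fin n) ℝ) (hn : 0 < n) (j : Fin n) :
    eig A j ≤ svalsDesc A ⟨0, hn⟩ ^ 2 := by
  rw [svalsDesc_sq]
  have h1 : eig A j = sortedEig A ((Tuple.sort (eig A)).symm j) := by
    simp [sortedEig]
  rw [h1]
  apply sortedEig_mono
  rw [Fin.le_def, Fin.val_rev]
  have := (((Tuple.sort (eig A)).symm j)).isLt
  simp only [Fin.val_mk]
  omega

lemma sortedEig_le_max (A : Matrix (Fin m) (Fin n) ℝ) (hn : 0 < n) (j : Fin n) :
    sortedEig A j ≤ svalsDesc A ⟨0, hn⟩ ^ 2 := eig_le_max A hn _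

lemma frobNormSq_le_card_max (A : Matrix (Fin m) (Fin n) ℝ) (hn : 0 < n) :
    frobNorm A ^ 2 ≤ n * svalsDesc A ⟨0, hn⟩ ^ 2 := by
  rw [frobNorm_sq, ← sum_eig]
  calc ∑ j, eig A j ≤ ∑ _j : Fin n, svalsDesc A ⟨0, hn⟩ ^ 2 :=
        Finset.sum_le_sum fun j _ => eig_le_max A hn j
    _ = n * svalsDesc A ⟨0, hn⟩ ^ 2 := by simp [mul_comm]

lemma svalsDesc_zero_le_kyFan2 (A : Matrix (Fin m) (Fin n) ℝ) (hn : 0 < n) (hk1 : 1 ≤ k) :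
    svalsDesc A ⟨0, hn⟩ ≤ kyFan2 k A := by
  have h1 : svalsDesc A ⟨0, hn⟩ ^ 2 ≤ kyFan2 k A ^ 2 := by
    rw [kyFan2_sq]
    apply Finset.single_le_sum (f := fun i => svalsDesc A i ^ 2) (fun _ _ => sq_nonneg _)
    simp only [Finset.mem_filter, Finset.mem_univ, true_and, Fin.val_mk]
    omega
  have := Real.sqrt_le_sqrt h1
  rwa [Real.sqrt_sq (svalsDesc_nonneg A _), Real.sqrt_sq (kyFan2_nonneg k A)] at this
  -- fallback
  
lemma kyFan2_pos {A : Matrix (Fin m) (Fin n) ℝ} (hn : 0 < n) (hk1 : 1 ≤ k) (hA : A ≠ 0) :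
    0 < kyFan2 k A := by
  have h1 : 0 < frobNorm A ^ 2 := pow_pos (frobNorm_pos hA) 2
  have h2 := frobNormSq_le_card_max A hn
  have h3 : 0 < svalsDesc A ⟨0, hn⟩ ^ 2 := by nlinarith
  have h4 : 0 < svalsDesc A ⟨0, hn⟩ := by
    rcases lt_or_eq_of_le (svalsDesc_nonneg A ⟨0, hn⟩) with h | h
    · exact h
    · rw [← h] at h3; simpa using h3
  exact lt_of_lt_of_le h4 (svalsDesc_zero_le_kyFan2 A hn hk1)

lemma abs_entry_le_sqrt_n {Y : Matrix (Fin m) (Fin n) ℝ} (hn : 0 < n) (hk1 : 1 ≤ k)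
    (hY : kyFan2 k Y ≤ 1) (i : Fin m) (j : Fin n) : |Y i j| ≤ Real.sqrt n := by
  have h1 : Y i j ^ 2 ≤ frobNorm Y ^ 2 := by
    rw [frobNorm_sq]
    calc Y i j ^ 2 ≤ ∑ j', Y i j' ^ 2 :=
          Finset.single_le_sum (f := fun j' => Y i j' ^ 2) (fun _ _ => sq_nonneg _)
            (Finset.mem_univ j)
      _ ≤ ∑ i', ∑ j', Y i' j' ^ 2 :=
          Finset.single_le_sum (f := fun i' => ∑ j', Y i' j' ^ 2)
            (fun _ _ => Finset.sum_nonneg fun _ _ => sq_nonneg _) (Finset.mem_univ i)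
  have h2 := frobNormSq_le_card_max Y hn
  have h3 : svalsDesc Y ⟨0, hn⟩ ≤ 1 := le_trans (svalsDesc_zero_le_kyFan2 Y hn hk1) hY
  have h4 : svalsDesc Y ⟨0, hn⟩ ^ 2 ≤ 1 :=
    pow_le_one₀ (svalsDesc_nonneg Y _) h3
  have h5 : Y i j ^ 2 ≤ (n : ℝ) := by nlinarith
  calc |Y i j| = Real.sqrt (Y i j ^ 2) := (Real.sqrt_sq_eq_abs _).symm
    _ ≤ Real.sqrt n := Real.sqrt_le_sqrt h5

lemma bddAbove_dualSet (A : Matrix (Fin m) (Fin n) ℝ) (hn : 0 < n) (hk1 : 1 ≤ k) :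
    BddAbove {c : ℝ | ∃ X : Matrix (Fin m) (Fin n) ℝ, kyFan2 k X ≤ 1 ∧ c = frobInner A X} := by
  refine ⟨∑ i, ∑ j, |A i j| * Real.sqrt n, ?_⟩
  rintro c ⟨Y, hY, rfl⟩
  apply Finset.sum_le_sum; intro i _
  apply Finset.sum_le_sum; intro j _
  calc A i j * Y i j ≤ |A i j * Y i j| := le_abs_self _
    _ = |A i j| * |Y i j| := abs_mul _ _
    _ ≤ |A i j| * Real.sqrt n :=
        mul_le_mul_of_nonneg_left (abs_entry_le_sqrt_n hn hk1 hY i j) (abs_nonneg _)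

lemma le_kyFan2Dual (A Y : Matrix (Fin m) (Fin n) ℝ) (hn : 0 < n) (hk1 : 1 ≤ k)
    (hY : kyFan2 k Y ≤ 1) : frobInner A Y ≤ kyFan2Dual k A :=
  le_csSup (bddAbove_dualSet A hn hk1) ⟨Y, hY, rfl⟩

lemma card_filter_lt (hkn : k ≤ n) :
    (Finset.univ.filter (fun i : Fin n => (i : ℕ) < k)).card = k := by
  have : (Finset.univ.filter (fun i : Fin n => (i : ℕ) < k))
      = (Finset.univ : Finset (Fin k)).map (Fin.castLEEmb hkn) := by
    ext j
    simp only [Finset.mem_filter, Finset.mem_univ, true_and, Finset.mem_map]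
    constructor
    · intro hj
      refine ⟨⟨j, hj⟩, ?_⟩
      ext; simp
    · rintro ⟨i, rfl⟩; simpa using i.isLt
  rw [this, Finset.card_map, Finset.card_univ, Fintype.card_fin]



lemma det_smul_sub_eq_prod {N : ℕ} {M : Matrix (Fin N) (Fin N) ℝ} (hM : M.IsHermitian)
    (a t : ℝ) : (a • M - t • 1).det = ∏ j, (a * hM.eigenvalues j - t) := by
  set U : Matrix (Fin N) (Fin N) ℝ := (hM.eigenvectorUnitary : Matrix (Fin N) (Fin N) ℝ)
  have hU1 : U * star U = 1 := Matrix.mem_unitaryGroup_iff.mp hM.eigenvectorUnitary.2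
  have hD : a • M - t • 1
      = U * Matrix.diagonal (fun j => a * hM.eigenvalues j - t) * star U := by
    have hdiag : Matrix.diagonal (fun j => a * hM.eigenvalues j - t)
        = a • Matrix.diagonal (RCLike.ofReal ∘ hM.eigenvalues) - t • (1 : Matrix (Fin N) (Fin N) ℝ) := by
      rw [Matrix.smul_one_eq_diagonal, ← Matrix.diagonal_smul, ← Matrix.diagonal_sub]
      congr 1
    rw [hdiag, Matrix.mul_sub, Matrix.sub_mul]
    congr 1
    · rw [Matrix.mul_smul, Matrix.smul_mul]
      congr 1
      conv_lhs => rw [hM.spectral_theorem, Unitary.conjStarAlgAut_apply]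
    · rw [Matrix.mul_smul, Matrix.smul_mul, Matrix.mul_one, hU1]
  have hU2 : star U * U = 1 := Matrix.mem_unitaryGroup_iff'.mp hM.eigenvectorUnitary.2
  rw [hD, Matrix.det_mul, Matrix.det_mul, mul_comm, ← mul_assoc, ← Matrix.det_mul, hU2]
  simp [Matrix.det_diagonal]

lemma monotone_multiset_unique {N : ℕ} {f g : Fin N → ℝ} (hf : Monotone f) (hg : Monotone g)
    (h : Multiset.map f Finset.univ.val = Multiset.map g Finset.univ.val) : f = g := by
  have hperm : (List.ofFn f).Perm (List.ofFn g) := by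
    rw [Fin.univ_val_map, Fin.univ_val_map] at h
    exact Multiset.coe_eq_coe.mp h
  exact List.ofFn_injective <|
    List.Perm.eq_of_sortedLE hf.sortedLE_ofFn hg.sortedLE_ofFn hperm

lemma multiset_map_comp_perm {N : ℕ} (f : Fin N → ℝ) (σ : Equiv.Perm (Fin N)) :
    Multiset.map (f ∘ σ) Finset.univ.val = Multiset.map f Finset.univ.val := by
  have h1 : Multiset.map (f ∘ σ) Finset.univ.val
      = Multiset.map f (Multiset.map σ Finset.univ.val) := by
    rw [Multiset.map_map]
  rw [h1]
  congr 1
  have : Multiset.map (⇑σ) Finset.univ.val = (Finset.univ.map σ.toEmbedding).val := by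
    rw [Finset.map_val]; rfl
  rw [this, Finset.map_univ_equiv]

lemma multiset_eig_smul (A : Matrix (Fin m) (Fin n) ℝ) (c : ℝ) :
    Multiset.map (eig (c • A)) Finset.univ.val
      = Multiset.map (fun j => c ^ 2 * eig A j) Finset.univ.val := by
  have hMM : ((c • A)ᴴ * (c • A)) = (c ^ 2) • (Aᴴ * A) := by
    rw [Matrix.conjTranspose_smul]
    rw [star_trivial, Matrix.smul_mul, Matrix.mul_smul, smul_smul, sq]
  have key : ∀ t : ℝ, ∏ j, (eig (c • A) j - t) = ∏ j, (c ^ 2 * eig A j - t) := by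
    intro t
    have h1 : ∏ j, (eig (c • A) j - t)
        = ((1 : ℝ) • ((c • A)ᴴ * (c • A)) - t • 1).det := by
      rw [Matrix.conjTranspose_eq_transpose_of_trivial, det_smul_sub_eq_prod (Matrix.isHermitian_transpose_mul_self (c • A)) 1 t]
      simp [eig]
    have h2 : ((1 : ℝ) • ((c • A)ᴴ * (c • A)) - t • 1).det
        = ((c ^ 2) • (Aᴴ * A) - t • (1 : Matrix (Fin n) (Fin n) ℝ)).det := by
      rw [one_smul, hMM]
    rw [h1, h2, Matrix.conjTranspose_eq_transpose_of_trivial, det_smul_sub_eq_prod (Matrix.isHermitian_transpose_mul_self A) (c ^ 2) t]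
    rfl
  -- turn into polynomial identity
  set P : Polynomial ℝ := ∏ j, (Polynomial.X - Polynomial.C (eig (c • A) j)) with hP
  set Q : Polynomial ℝ := ∏ j, (Polynomial.X - Polynomial.C (c ^ 2 * eig A j)) with hQ
  have hPQ : P = Q := by
    apply Polynomial.funext
    intro t
    have e1 : P.eval t = ∏ j, (t - eig (c • A) j) := by
      simp [hP, Polynomial.eval_prod]
    have e2 : Q.eval t = ∏ j, (t - c ^ 2 * eig A j) := by
      simp [hQ, Polynomial.eval_prod]
    have flip : ∀ f : Fin n → ℝ, ∏ j, (t - f j) = (-1 : ℝ) ^ n * ∏ j, (f j - t) := by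
      intro f
      rw [show ((-1 : ℝ) ^ n) = ∏ _j : Fin n, (-1 : ℝ) by simp, ← Finset.prod_mul_distrib]
      exact Finset.prod_congr rfl fun j _ => by ring
    rw [e1, e2, flip, flip, key t]
  have hroots : P.roots = Q.roots := by rw [hPQ]
  have rP : P.roots = Multiset.map (eig (c • A)) Finset.univ.val := by
    rw [hP, show (∏ j, (Polynomial.X - Polynomial.C (eig (c • A) j)))
        = ((Multiset.map (eig (c • A)) Finset.univ.val).map
            (fun a => Polynomial.X - Polynomial.C a)).prod by
      rw [Multiset.map_map]; rfl]
    exact Polynomial.roots_multiset_prod_X_sub_C _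
  have rQ : Q.roots = Multiset.map (fun j => c ^ 2 * eig A j) Finset.univ.val := by
    rw [hQ, show (∏ j, (Polynomial.X - Polynomial.C (c ^ 2 * eig A j)))
        = ((Multiset.map (fun j => c ^ 2 * eig A j) Finset.univ.val).map
            (fun a => Polynomial.X - Polynomial.C a)).prod by
      rw [Multiset.map_map]; rfl]
    exact Polynomial.roots_multiset_prod_X_sub_C _
  rw [← rP, ← rQ, hroots]

lemma sortedEig_smul (A : Matrix (Fin m) (Fin n) ℝ) (c : ℝ) :
    sortedEig (c • A) = fun i => c ^ 2 * sortedEig A i := by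
  apply monotone_multiset_unique (sortedEig_mono (c • A))
  · intro i j hij
    exact mul_le_mul_of_nonneg_left (sortedEig_mono A hij) (sq_nonneg c)
  · calc Multiset.map (sortedEig (c • A)) Finset.univ.val
        = Multiset.map (eig (c • A)) Finset.univ.val :=
          multiset_map_comp_perm (eig (c • A)) (Tuple.sort (eig (c • A)))
      _ = Multiset.map (fun j => c ^ 2 * eig A j) Finset.univ.val := multiset_eig_smul A c
      _ = Multiset.map (fun i => c ^ 2 * sortedEig A i) Finset.univ.val :=
          (multiset_map_comp_perm (fun j => c ^ 2 * eig A j) (Tuple.sort (eig A))).symm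

lemma svalsDesc_smul (A : Matrix (Fin m) (Fin n) ℝ) {c : ℝ} (hc : 0 ≤ c) (i : Fin n) :
    svalsDesc (c • A) i = c * svalsDesc A i := by
  rw [svalsDesc_eq, svalsDesc_eq, sortedEig_smul]
  rw [Real.sqrt_mul (sq_nonneg c), Real.sqrt_sq hc]

lemma kyFan2_smul (A : Matrix (Fin m) (Fin n) ℝ) {c : ℝ} (hc : 0 ≤ c) :
    kyFan2 k (c • A) = c * kyFan2 k A := by
  rw [kyFan2, kyFan2]
  have : ∀ i ∈ Finset.univ.filter (fun i : Fin n => (i : ℕ) < k),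
      svalsDesc (c • A) i ^ 2 = c ^ 2 * svalsDesc A i ^ 2 := by
    intro i _; rw [svalsDesc_smul A hc]; ring
  rw [Finset.sum_congr rfl this, ← Finset.mul_sum, Real.sqrt_mul (sq_nonneg c), Real.sqrt_sq hc]



lemma rank_sub_le (X Y : Matrix (Fin m) (Fin n) ℝ) : (X - Y).rank ≤ X.rank + Y.rank := by
  have h1 : LinearMap.range (X - Y).mulVecLin
      ≤ LinearMap.range X.mulVecLin ⊔ LinearMap.range Y.mulVecLin := by
    rintro x ⟨v, rfl⟩
    have : (X - Y).mulVecLin v = X.mulVecLin v - Y.mulVecLin v := by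
      simp [Matrix.mulVecLin_apply, Matrix.sub_mulVec]
    rw [this]
    exact Submodule.sub_mem _
      (Submodule.mem_sup_left (LinearMap.mem_range_self _ v))
      (Submodule.mem_sup_right (LinearMap.mem_range_self _ v))
  calc (X - Y).rank
      ≤ Module.finrank ℝ (LinearMap.range X.mulVecLin ⊔ LinearMap.range Y.mulVecLin :
          Submodule ℝ (Fin m → ℝ)) := Submodule.finrank_mono h1
    _ ≤ X.rank + Y.rank := Submodule.finrank_add_le_finrank_add_finrank _ _

lemma svalsDesc_pos_of_lt_rank {X : Matrix (Fin m) (Fin n) ℝ} (hkn : k < n)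
    (h : k < X.rank) : 0 < svalsDesc X ⟨k, hkn⟩ := by
  rcases lt_or_eq_of_le (svalsDesc_nonneg X ⟨k, hkn⟩) with hlt | heq
  · exact hlt
  exfalso
  have hzero : sortedEig X ((⟨k, hkn⟩ : Fin n).rev) = 0 := by
    rw [← svalsDesc_sq, ← heq]; ring
  -- all sorted eigenvalues at index ≤ rev k vanish
  have hvanish : ∀ j : Fin n, j ≤ (⟨k, hkn⟩ : Fin n).rev → sortedEig X j = 0 := by
    intro j hj
    have h1 := sortedEig_mono X hj
    have h2 := sortedEig_nonneg X j
    rw [hzero] at h1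
    linarith
  -- rank of X equals number of nonzero eigenvalues of XᴴX
  have hrank : X.rank = Fintype.card {i // eig X i ≠ 0} := by
    have h1 : (Xᴴ * X).rank = X.rank := by
      rw [Matrix.conjTranspose_eq_transpose_of_trivial, Matrix.rank_transpose_mul_self]
    rw [← h1]
    exact (Matrix.isHermitian_transpose_mul_self X).rank_eq_card_non_zero_eigs
  have hcard1 : Fintype.card {i // eig X i ≠ 0}
      = (Finset.univ.filter (fun i : Fin n => eig X i ≠ 0)).card :=
    Fintype.card_subtype _
  set σ := Tuple.sort (eig X)
  have hcard2 : (Finset.univ.filter (fun i : Fin n => eig X i ≠ 0)).card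
      = (Finset.univ.filter (fun j : Fin n => sortedEig X j ≠ 0)).card := by
    apply Finset.card_bij (fun j _ => σ.symm j)
    · intro j hj
      simp only [Finset.mem_filter, Finset.mem_univ, true_and] at hj ⊢
      simpa [sortedEig, σ] using hj
    · intro a ha b hb hab
      exact σ.symm.injective hab
    · intro i hi
      simp only [Finset.mem_filter, Finset.mem_univ, true_and] at hi ⊢
      refine ⟨σ i, ?_, by simp⟩
      simpa [sortedEig, σ] using hi
  have hsub : (Finset.univ.filter (fun j : Fin n => sortedEig X j ≠ 0))
      ⊆ Finset.Ioi ((⟨k, hkn⟩ : Fin n).rev) := by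
    intro j hj
    simp only [Finset.mem_filter, Finset.mem_univ, true_and] at hj
    rw [Finset.mem_Ioi]
    by_contra hle
    exact hj (hvanish j (le_of_not_gt hle))
  have hcard3 : (Finset.Ioi ((⟨k, hkn⟩ : Fin n).rev)).card = k := by
    rw [Fin.card_Ioi, Fin.val_rev]
    simp only [Fin.val_mk]
    omega
  have := Finset.card_le_card hsub
  rw [hcard3] at this
  rw [hrank, hcard1, hcard2] at h
  omega

lemma kyFan2_lt_frobNorm {X : Matrix (Fin m) (Fin n) ℝ} (hkn : k < n) (h : k < X.rank) :
    kyFan2 k X < frobNorm X := by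
  have hsq : kyFan2 k X ^ 2 < frobNorm X ^ 2 := by
    rw [kyFan2_sq, frobNorm_sq, ← sum_svalsDesc_sq]
    rw [← Finset.sum_filter_add_sum_filter_not Finset.univ (fun i : Fin n => (i : ℕ) < k)
      (fun i => svalsDesc X i ^ 2)]
    have hpos : 0 < ∑ i ∈ Finset.univ.filter (fun i : Fin n => ¬ (i : ℕ) < k),
        svalsDesc X i ^ 2 := by
      have hmem : (⟨k, hkn⟩ : Fin n) ∈
          Finset.univ.filter (fun i : Fin n => ¬ (i : ℕ) < k) := by simp
      have hle : svalsDesc X ⟨k, hkn⟩ ^ 2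
          ≤ ∑ i ∈ Finset.univ.filter (fun i : Fin n => ¬ (i : ℕ) < k), svalsDesc X i ^ 2 :=
        Finset.single_le_sum (f := fun i => svalsDesc X i ^ 2) (fun _ _ => sq_nonneg _) hmem
      have := svalsDesc_pos_of_lt_rank hkn h
      nlinarith
    linarith
  exact lt_of_pow_lt_pow_left₀ 2 (frobNorm_nonneg X) hsq

/-- Ky Fan type rearrangement bound. -/
lemma sum_mul_le_top (hk1 : 1 ≤ k) (hkn : k ≤ n) (μ γ : Fin n → ℝ)
    (hmono : ∀ i j : Fin n, i ≤ j → μ j ≤ μ i) (hμ0 : ∀ i, 0 ≤ μ i)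
    (hγ0 : ∀ i, 0 ≤ γ i) (hγ1 : ∀ i, γ i ≤ 1) (hsum : ∑ i, γ i ≤ k) :
    ∑ i, μ i * γ i ≤ ∑ i ∈ Finset.univ.filter (fun i : Fin n => (i : ℕ) < k), μ i := by
  have hkn' : k - 1 < n := by omega
  set t := μ ⟨k - 1, hkn'⟩ with ht
  have ht0 : 0 ≤ t := hμ0 _
  set s := Finset.univ.filter (fun i : Fin n => (i : ℕ) < k) with hs
  have hsplit : ∑ i, μ i * γ i
      = ∑ i ∈ s, μ i * γ i + ∑ i ∈ Finset.univ.filter (fun i : Fin n => ¬ (i : ℕ) < k),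
          μ i * γ i :=
    (Finset.sum_filter_add_sum_filter_not Finset.univ _ _).symm
  have h1 : ∑ i ∈ s, μ i * γ i ≤ ∑ i ∈ s, (μ i + t * γ i - t) := by
    apply Finset.sum_le_sum
    intro i hi
    simp only [hs, Finset.mem_filter, Finset.mem_univ, true_and] at hi
    have hit : t ≤ μ i := hmono i ⟨k - 1, hkn'⟩ (by rw [Fin.le_def]; simpa using by omega)
    nlinarith [hγ1 i]
  have h2 : ∑ i ∈ Finset.univ.filter (fun i : Fin n => ¬ (i : ℕ) < k), μ i * γ i
      ≤ ∑ i ∈ Finset.univ.filter (fun i : Fin n => ¬ (i : ℕ) < k), t * γ i := by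
    apply Finset.sum_le_sum
    intro i hi
    simp only [Finset.mem_filter, Finset.mem_univ, true_and] at hi
    have hit : μ i ≤ t := hmono ⟨k - 1, hkn'⟩ i (by rw [Fin.le_def]; simpa using by omega)
    nlinarith [hγ0 i]
  have hcard : ∑ _i ∈ s, (1 : ℝ) = k := by
    rw [Finset.sum_const, hs, card_filter_lt hkn]; simp
  have hγsplit : ∑ i ∈ s, γ i + ∑ i ∈ Finset.univ.filter (fun i : Fin n => ¬ (i : ℕ) < k), γ i
      = ∑ i, γ i :=
    Finset.sum_filter_add_sum_filter_not Finset.univ _ _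
  have expand1 : ∑ i ∈ s, (μ i + t * γ i - t) = ∑ i ∈ s, μ i + t * ∑ i ∈ s, γ i - t * k := by
    rw [Finset.sum_sub_distrib, Finset.sum_add_distrib, ← Finset.mul_sum]
    have : ∑ _i ∈ s, t = t * k := by
      rw [Finset.sum_const, hs, card_filter_lt hkn]; ring
    rw [this]
  have expand2 : ∑ i ∈ Finset.univ.filter (fun i : Fin n => ¬ (i : ℕ) < k), t * γ i
      = t * ∑ i ∈ Finset.univ.filter (fun i : Fin n => ¬ (i : ℕ) < k), γ i := by
    rw [Finset.mul_sum]
  have hγs : t * (∑ i ∈ s, γ i) + t * (∑ i ∈ Finset.univ.filter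
      (fun i : Fin n => ¬ (i : ℕ) < k), γ i) ≤ t * k := by
    rw [← mul_add, hγsplit]
    exact mul_le_mul_of_nonneg_left hsum ht0
  rw [hsplit]
  calc ∑ i ∈ s, μ i * γ i + ∑ i ∈ Finset.univ.filter (fun i : Fin n => ¬ (i : ℕ) < k), μ i * γ i
      ≤ (∑ i ∈ s, μ i + t * ∑ i ∈ s, γ i - t * k)
        + t * ∑ i ∈ Finset.univ.filter (fun i : Fin n => ¬ (i : ℕ) < k), γ i := by
        rw [← expand2]
        exact add_le_add (le_of_le_of_eq h1 expand1) h2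
    _ ≤ ∑ i ∈ s, μ i := by linarith


open RealInnerProductSpace


lemma euc_sum_apply {n d : ℕ} (f : Fin d → EuclideanSpace ℝ (Fin n)) (j : Fin n) :
    (∑ t, f t) j = ∑ t, f t j :=
  map_sum (EuclideanSpace.proj j (𝕜 := ℝ)).toLinearMap f Finset.univ

lemma euc_inner_eq {n : ℕ} (x y : EuclideanSpace ℝ (Fin n)) : ⟪x, y⟫ = ∑ j, x j * y j := by
  simp [PiLp.inner_apply, RCLike.inner_apply, mul_comm]

lemma frobInner_le_frobNorm_of_rank_le (hk1 : 1 ≤ k) (hkn : k ≤ n)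
    (A Y : Matrix (Fin m) (Fin n) ℝ) (hr : A.rank ≤ k) (hY : kyFan2 k Y ≤ 1) :
    frobInner A Y ≤ frobNorm A := by
  classical
  set V : Submodule ℝ (EuclideanSpace ℝ (Fin n)) :=
    (LinearMap.range (Matrix.mulVecLin Aᵀ)).map (((WithLp.linearEquiv 2 ℝ (Fin n → ℝ)).symm : (Fin n → ℝ) ≃ₗ[ℝ] _) :
            (Fin n → ℝ) →ₗ[ℝ] EuclideanSpace ℝ (Fin n)) with hV
  have hdrank : Module.finrank ℝ V = A.rank := by
    have h : V = (LinearMap.range (Matrix.mulVecLin Aᵀ)).map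
        (((WithLp.linearEquiv 2 ℝ (Fin n → ℝ)).symm : (Fin n → ℝ) ≃ₗ[ℝ] _) :
          (Fin n → ℝ) →ₗ[ℝ] EuclideanSpace ℝ (Fin n)) := rfl
    rw [h, LinearEquiv.finrank_map_eq (WithLp.linearEquiv 2 ℝ (Fin n → ℝ)).symm
      (LinearMap.range (Matrix.mulVecLin Aᵀ)), ← Matrix.rank_transpose A]
    rfl
  set d := Module.finrank ℝ V with hdd
  have hd : d ≤ k := le_trans (le_of_eq hdrank) hr
  set B := stdOrthonormalBasis ℝ V with hB
  set w : Fin d → EuclideanSpace ℝ (Fin n) := fun t => (B t : EuclideanSpace ℝ (Fin n)) with hw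
  -- orthonormality of w as sums
  have hworth : Orthonormal ℝ w := by
    rw [orthonormal_iff_ite]
    intro s t
    have h := orthonormal_iff_ite.mp B.orthonormal s t
    exact h
  have hwsum : ∀ s t : Fin d, (∑ j, w s j * w t j) = if s = t then 1 else 0 := by
    intro s t
    rw [← euc_inner_eq]
    exact orthonormal_iff_ite.mp hworth s t
  -- expansion of rows of A
  have hexp : ∀ (i : Fin m) (j : Fin n),
      A i j = ∑ t, (∑ j', w t j' * A i j') * w t j := by
    intro i j
    set ρ : V := ⟨(WithLp.linearEquiv 2 ℝ (Fin n → ℝ)).symm (Aᵀ *ᵥ Pi.single i 1),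
      Submodule.mem_map_of_mem (LinearMap.mem_range_self _ _)⟩ with hρ
    have hρval : ∀ j' : Fin n, (ρ : EuclideanSpace ℝ (Fin n)) j' = A i j' := by
      intro j'
      show (Aᵀ *ᵥ Pi.single i 1) j' = A i j'
      simp [Matrix.mulVec_single]
    have hrepr := B.sum_repr' ρ
    have hcoesum : ((↑(∑ t, (⟪B t, ρ⟫ : ℝ) • B t) : EuclideanSpace ℝ (Fin n))) j
        = ∑ t, (⟪B t, ρ⟫ : ℝ) * w t j := by
      rw [Submodule.coe_sum]
      rw [euc_sum_apply]
      apply Finset.sum_congr rfl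
      intro t _
      rfl
    calc A i j = (ρ : EuclideanSpace ℝ (Fin n)) j := (hρval j).symm
      _ = ((↑(∑ t, (⟪B t, ρ⟫ : ℝ) • B t) : EuclideanSpace ℝ (Fin n))) j := by rw [hrepr]
      _ = ∑ t, (⟪B t, ρ⟫ : ℝ) * w t j := hcoesum
      _ = ∑ t, (∑ j', w t j' * A i j') * w t j := by
          apply Finset.sum_congr rfl
          intro t _
          congr 1
          have h0 : (⟪B t, ρ⟫ : ℝ) = ⟪w t, (ρ : EuclideanSpace ℝ (Fin n))⟫ := rfl
          rw [h0, euc_inner_eq]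
          exact Finset.sum_congr rfl fun j' _ => by rw [hρval j']
  -- the auxiliary quantities
  set z : Fin m → Fin d → ℝ := fun i t => ∑ j, w t j * Y i j with hz
  set c : Fin m → Fin d → ℝ := fun i t => ∑ j', w t j' * A i j' with hc
  set BM : Matrix (Fin m) (Fin n) ℝ := fun i j => ∑ t, z i t * w t j with hBM
  -- step 1 : frobInner A Y = ∑ i ∑ t c i t * z i t
  have step1 : frobInner A Y = ∑ i, ∑ t, c i t * z i t := by
    rw [frobInner]
    apply Finset.sum_congr rfl
    intro i _
    calc ∑ j, A i j * Y i j = ∑ j, (∑ t, c i t * w t j) * Y i j := by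
          apply Finset.sum_congr rfl
          intro j _
          rw [← hexp i j]
      _ = ∑ j, ∑ t, c i t * (w t j * Y i j) := by
          apply Finset.sum_congr rfl
          intro j _
          rw [Finset.sum_mul]
          exact Finset.sum_congr rfl fun t _ => by ring
      _ = ∑ t, ∑ j, c i t * (w t j * Y i j) := Finset.sum_comm
      _ = ∑ t, c i t * z i t := by
          apply Finset.sum_congr rfl
          intro t _
          rw [← Finset.mul_sum]
  -- step 2 : frobInner A BM = same
  have step2 : frobInner A BM = ∑ i, ∑ t, c i t * z i t := by
    rw [frobInner]
    apply Finset.sum_congr rfl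
    intro i _
    calc ∑ j, A i j * BM i j = ∑ j, ∑ t, z i t * (A i j * w t j) := by
          apply Finset.sum_congr rfl
          intro j _
          show A i j * ∑ t, z i t * w t j = _
          rw [Finset.mul_sum]
          exact Finset.sum_congr rfl fun t _ => by ring
      _ = ∑ t, ∑ j, z i t * (A i j * w t j) := Finset.sum_comm
      _ = ∑ t, c i t * z i t := by
          apply Finset.sum_congr rfl
          intro t _
          rw [← Finset.mul_sum]
          have hcz : (∑ j, A i j * w t j) = c i t :=
            Finset.sum_congr rfl fun j _ => by ring
          rw [hcz]
          ring
  -- step 4 : frobNorm BM squared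
  have step4 : frobNorm BM ^ 2 = ∑ i, ∑ t, z i t ^ 2 := by
    rw [frobNorm_sq]
    apply Finset.sum_congr rfl
    intro i _
    calc ∑ j, BM i j ^ 2
        = ∑ j, ∑ t, ∑ s, (z i t * w t j) * (z i s * w s j) := by
          apply Finset.sum_congr rfl
          intro j _
          rw [sq]
          exact Finset.sum_mul_sum _ _ _ _
      _ = ∑ t, ∑ s, ∑ j, (z i t * w t j) * (z i s * w s j) := by
          rw [Finset.sum_comm]
          apply Finset.sum_congr rfl
          intro t _
          rw [Finset.sum_comm]
      _ = ∑ t, ∑ s, (z i t * z i s) * ∑ j, w t j * w s j := by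
          apply Finset.sum_congr rfl; intro t _
          apply Finset.sum_congr rfl; intro s _
          rw [Finset.mul_sum]
          exact Finset.sum_congr rfl fun j _ => by ring
      _ = ∑ t, z i t ^ 2 := by
          apply Finset.sum_congr rfl
          intro t _
          rw [show (∑ s, (z i t * z i s) * ∑ j, w t j * w s j)
              = ∑ s, (if t = s then z i t * z i s else 0) from
            Finset.sum_congr rfl fun s _ => by rw [hwsum t s]; split <;> simp]
          rw [Finset.sum_ite_eq]
          simp [sq]
  -- step 5 : ∑ i ∑ t z i t ^2 ≤ 1
  have step5 : ∑ i, ∑ t, z i t ^ 2 ≤ 1 := by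
    set N : Matrix (Fin n) (Fin n) ℝ := Yᴴ * Y with hN
    have hNh : N.IsHermitian := Matrix.isHermitian_transpose_mul_self Y
    set v := hNh.eigenvectorBasis with hv
    have hmvv : ∀ j : Fin n, N *ᵥ (v j : EuclideanSpace ℝ (Fin n)) = eig Y j • (v j : EuclideanSpace ℝ (Fin n)) :=
      fun j => hNh.mulVec_eigenvectorBasis j
    -- q t := ∑ i z i t ^2 = ∑ j eig Y j * ⟪v j, w t⟫ ^ 2
    have hq : ∀ t : Fin d, ∑ i, z i t ^ 2 = ∑ j, eig Y j * ⟪(v j : EuclideanSpace ℝ (Fin n)), w t⟫ ^ 2 := by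
      intro t
      set x : EuclideanSpace ℝ (Fin n) := w t with hx
      have ha : ∑ i, z i t ^ 2 = ⟪x, (WithLp.toLp 2 (N *ᵥ x : Fin n → ℝ))⟫ := by
        rw [euc_inner_eq]
        have hNapp : ∀ j : Fin n, (N *ᵥ (x : Fin n → ℝ)) j = ∑ j', (∑ i, Y i j * Y i j') * x j' := by
          intro j
          show ∑ j', N j j' * x j' = _
          apply Finset.sum_congr rfl
          intro j' _
          congr 1
        calc ∑ i, z i t ^ 2
            = ∑ i, (∑ j, Y i j * x j) * (∑ j', Y i j' * x j') := by
              apply Finset.sum_congr rfl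
              intro i _
              rw [hz]
              simp only []
              rw [sq, show (∑ j, w t j * Y i j) = ∑ j, Y i j * x j from
                Finset.sum_congr rfl fun j _ => by rw [hx]; ring]
          _ = ∑ i, ∑ j, ∑ j', (Y i j * x j) * (Y i j' * x j') := by
              apply Finset.sum_congr rfl
              intro i _
              exact Finset.sum_mul_sum _ _ _ _
          _ = ∑ j, ∑ j', ∑ i, (Y i j * x j) * (Y i j' * x j') := by
              rw [Finset.sum_comm]
              apply Finset.sum_congr rfl
              intro j _
              rw [Finset.sum_comm]
          _ = ∑ j, x j * (∑ j', (∑ i, Y i j * Y i j') * x j') := by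
              apply Finset.sum_congr rfl; intro j _
              rw [Finset.mul_sum]
              apply Finset.sum_congr rfl; intro j' _
              rw [Finset.sum_mul, Finset.mul_sum]
              exact Finset.sum_congr rfl fun i _ => by ring
          _ = ∑ j, x j * (N *ᵥ (x : Fin n → ℝ)) j := by
              apply Finset.sum_congr rfl; intro j _
              rw [hNapp j]
      have hb : ⟪x, (WithLp.toLp 2 (N *ᵥ x : Fin n → ℝ))⟫
          = ∑ j, ⟪x, (v j : EuclideanSpace ℝ (Fin n))⟫ * ⟪(v j : EuclideanSpace ℝ (Fin n)), (WithLp.toLp 2 (N *ᵥ x : Fin n → ℝ))⟫ :=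
        (v.sum_inner_mul_inner x _).symm
      have hcym : ∀ j : Fin n, ⟪(v j : EuclideanSpace ℝ (Fin n)), (WithLp.toLp 2 (N *ᵥ x : Fin n → ℝ))⟫
          = eig Y j * ⟪(v j : EuclideanSpace ℝ (Fin n)), x⟫ := by
        intro j
        rw [euc_inner_eq, euc_inner_eq, WithLp.ofLp_toLp]
        have hsymm : ∑ l, (v j : EuclideanSpace ℝ (Fin n)) l * (N *ᵥ (x : Fin n → ℝ)) l
            = ∑ l, (N *ᵥ ((v j : EuclideanSpace ℝ (Fin n)) : Fin n → ℝ)) l * x l := by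
          calc ∑ l, (v j : EuclideanSpace ℝ (Fin n)) l * (N *ᵥ (x : Fin n → ℝ)) l
              = ∑ l, ∑ l', (v j : EuclideanSpace ℝ (Fin n)) l * (N l l' * x l') := by
                apply Finset.sum_congr rfl; intro l _
                rw [show (N *ᵥ (x : Fin n → ℝ)) l = ∑ l', N l l' * x l' from rfl, Finset.mul_sum]
            _ = ∑ l', ∑ l, (v j : EuclideanSpace ℝ (Fin n)) l * (N l l' * x l') := Finset.sum_comm
            _ = ∑ l', (∑ l, N l' l * (v j : EuclideanSpace ℝ (Fin n)) l) * x l' := by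
                apply Finset.sum_congr rfl; intro l' _
                rw [Finset.sum_mul]
                apply Finset.sum_congr rfl; intro l _
                have : N l l' = N l' l := by
                  conv_lhs => rw [← hNh]
                  rw [Matrix.conjTranspose_apply, star_trivial]
                rw [this]; ring
            _ = ∑ l', (N *ᵥ ((v j : EuclideanSpace ℝ (Fin n)) : Fin n → ℝ)) l' * x l' := by
                apply Finset.sum_congr rfl; intro l' _
                rfl
        rw [hsymm]
        rw [hmvv j]
        rw [Finset.mul_sum]
        apply Finset.sum_congr rfl; intro l _
        show (eig Y j • (v j : EuclideanSpace ℝ (Fin n))) l * x l = _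
        show eig Y j * (v j : EuclideanSpace ℝ (Fin n)) l * x l = _
        ring
      rw [ha, hb]
      apply Finset.sum_congr rfl
      intro j _
      rw [hcym j, real_inner_comm x]
      ring
    -- Bessel bound for each j and Parseval for each t
    set cc : Fin n → ℝ := fun j => ∑ t, ⟪(v j : EuclideanSpace ℝ (Fin n)), w t⟫ ^ 2 with hcc
    have hcc0 : ∀ j, 0 ≤ cc j := fun j => Finset.sum_nonneg fun _ _ => sq_nonneg _
    have hcc1 : ∀ j, cc j ≤ 1 := by
      intro j
      have hb := hworth.sum_inner_products_le (𝕜 := ℝ) (v j : EuclideanSpace ℝ (Fin n)) (s := Finset.univ)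
      have hnorm : ‖(v j : EuclideanSpace ℝ (Fin n))‖ = 1 := v.orthonormal.1 j
      rw [hnorm] at hb
      calc cc j = ∑ t, ‖⟪w t, (v j : EuclideanSpace ℝ (Fin n))⟫‖ ^ 2 := by
            apply Finset.sum_congr rfl
            intro t _
            rw [real_inner_comm, Real.norm_eq_abs, sq_abs]
        _ ≤ 1 := by simpa using hb
    have hccsum : ∑ j, cc j ≤ (k : ℝ) := by
      have hpt : ∀ t : Fin d, ∑ j, ⟪(v j : EuclideanSpace ℝ (Fin n)), w t⟫ ^ 2 = 1 := by
        intro t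
        have hp := v.sum_inner_mul_inner (w t) (w t)
        have hxx : ⟪w t, w t⟫ = 1 := by
          rw [real_inner_self_eq_norm_sq, hworth.1 t]
          norm_num
        rw [hxx] at hp
        rw [← hp]
        apply Finset.sum_congr rfl
        intro j _
        rw [real_inner_comm (w t)]
        ring
      calc ∑ j, cc j = ∑ t : Fin d, ∑ j : Fin n, ⟪(v j : EuclideanSpace ℝ (Fin n)), w t⟫ ^ 2 := Finset.sum_comm
        _ = ∑ _t : Fin d, (1 : ℝ) := Finset.sum_congr rfl fun t _ => hpt t
        _ = (d : ℝ) := by simp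
        _ ≤ (k : ℝ) := by exact_mod_cast hd
    -- reindex to sorted order and apply the rearrangement bound
    have hswap : ∑ i, ∑ t, z i t ^ 2 = ∑ j, eig Y j * cc j := by
      calc ∑ i, ∑ t, z i t ^ 2 = ∑ t, ∑ i, z i t ^ 2 := Finset.sum_comm
        _ = ∑ t, ∑ j, eig Y j * ⟪(v j : EuclideanSpace ℝ (Fin n)), w t⟫ ^ 2 :=
            Finset.sum_congr rfl fun t _ => hq t
        _ = ∑ j, ∑ t, eig Y j * ⟪(v j : EuclideanSpace ℝ (Fin n)), w t⟫ ^ 2 := Finset.sum_comm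
        _ = ∑ j, eig Y j * cc j := Finset.sum_congr rfl fun j _ => by
            rw [hcc]; exact (Finset.mul_sum _ _ _).symm
    set σ := Tuple.sort (eig Y) with hσ
    set μ : Fin n → ℝ := fun i => sortedEig Y i.rev with hμ
    set γ : Fin n → ℝ := fun i => cc (σ i.rev) with hγ
    have hreidx : ∑ j, eig Y j * cc j = ∑ i, μ i * γ i := by
      calc ∑ j, eig Y j * cc j = ∑ j, eig Y (σ j) * cc (σ j) :=
            (Equiv.sum_comp σ (fun j => eig Y j * cc j)).symm
        _ = ∑ i, eig Y (σ (Fin.revPerm i)) * cc (σ (Fin.revPerm i)) :=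
            (Equiv.sum_comp (Fin.revPerm) (fun j => eig Y (σ j) * cc (σ j))).symm
        _ = ∑ i, μ i * γ i := by
            apply Finset.sum_congr rfl
            intro i _
            rfl
    have hγreidx : ∑ i, γ i = ∑ j, cc j := by
      calc ∑ i, γ i = ∑ i, cc (σ (Fin.revPerm i)) := rfl
        _ = ∑ j, cc (σ j) := Equiv.sum_comp (Fin.revPerm) (fun j => cc (σ j))
        _ = ∑ j, cc j := Equiv.sum_comp σ cc
    have hkey : ∑ i, μ i * γ i ≤ ∑ i ∈ Finset.univ.filter (fun i : Fin n => (i : ℕ) < k), μ i := by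
      apply sum_mul_le_top hk1 hkn
      · intro i j hij
        exact sortedEig_mono Y (Fin.rev_le_rev.mpr hij)
      · intro i; exact sortedEig_nonneg Y _
      · intro i; exact hcc0 _
      · intro i; exact hcc1 _
      · rw [hγreidx]; exact hccsum
    have hfin : ∑ i ∈ Finset.univ.filter (fun i : Fin n => (i : ℕ) < k), μ i ≤ 1 := by
      have h1 : ∑ i ∈ Finset.univ.filter (fun i : Fin n => (i : ℕ) < k), μ i = kyFan2 k Y ^ 2 := by
        rw [kyFan2_sq]
        exact Finset.sum_congr rfl fun i _ => (svalsDesc_sq Y i).symm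
      rw [h1]
      exact pow_le_one₀ (kyFan2_nonneg k Y) hY
    rw [hswap, hreidx]
    exact le_trans hkey hfin
  -- combine via Cauchy-Schwarz
  have hCS : (frobInner A BM) ^ 2 ≤ frobNorm A ^ 2 * frobNorm BM ^ 2 := by
    have h1 : frobInner A BM = ∑ p : Fin m × Fin n, A p.1 p.2 * BM p.1 p.2 := by
      rw [frobInner, Fintype.sum_prod_type]
    have h2 : frobNorm A ^ 2 = ∑ p : Fin m × Fin n, A p.1 p.2 ^ 2 := by
      rw [frobNorm_sq, Fintype.sum_prod_type]
    have h3 : frobNorm BM ^ 2 = ∑ p : Fin m × Fin n, BM p.1 p.2 ^ 2 := by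
      rw [frobNorm_sq, Fintype.sum_prod_type]
    rw [h1, h2, h3]
    exact Finset.sum_mul_sq_le_sq_mul_sq Finset.univ _ _
  have hBM1 : frobNorm BM ^ 2 ≤ 1 := by rw [step4]; exact step5
  have hfr : (frobInner A BM) ^ 2 ≤ frobNorm A ^ 2 := by
    calc (frobInner A BM) ^ 2 ≤ frobNorm A ^ 2 * frobNorm BM ^ 2 := hCS
      _ ≤ frobNorm A ^ 2 * 1 := mul_le_mul_of_nonneg_left hBM1 (sq_nonneg _)
      _ = frobNorm A ^ 2 := mul_one _
  have : frobInner A BM ≤ frobNorm A := by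
    calc frobInner A BM ≤ |frobInner A BM| := le_abs_self _
      _ = Real.sqrt ((frobInner A BM) ^ 2) := (Real.sqrt_sq_eq_abs _).symm
      _ ≤ Real.sqrt (frobNorm A ^ 2) := Real.sqrt_le_sqrt hfr
      _ = frobNorm A := Real.sqrt_sq (frobNorm_nonneg A)
  rw [step1, ← step2]
  exact this


-- PART 6 : assembly

lemma kyFan2_zero_mat : kyFan2 k (0 : Matrix (Fin m) (Fin n) ℝ) = 0 := by
  have h : (0 : Matrix (Fin m) (Fin n) ℝ) = (0 : ℝ) • (0 : Matrix (Fin m) (Fin n) ℝ) := by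
    rw [zero_smul]
  rw [h, kyFan2_smul _ le_rfl, zero_mul]

lemma dual_le_frobNorm (hk1 : 1 ≤ k) (hkn : k ≤ n)
    {A : Matrix (Fin m) (Fin n) ℝ} (hr : A.rank ≤ k) : kyFan2Dual k A ≤ frobNorm A := by
  apply csSup_le
  · exact ⟨frobInner A 0, 0, by rw [kyFan2_zero_mat]; norm_num, rfl⟩
  · rintro c ⟨Y, hY, rfl⟩
    exact frobInner_le_frobNorm_of_rank_le hk1 hkn A Y hr hY

lemma frobInner_smul_self (X : Matrix (Fin m) (Fin n) ℝ) (c : ℝ) :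
    frobInner X (c • X) = c * frobNorm X ^ 2 := by
  rw [frobInner, frobNorm_sq, Finset.mul_sum]
  apply Finset.sum_congr rfl
  intro i _
  rw [Finset.mul_sum]
  apply Finset.sum_congr rfl
  intro j _
  rw [Matrix.smul_apply, smul_eq_mul]
  ring

end KFAux

/-- under `δ_{2k}(𝒜) < 1`, a rank-≤k feasible `X₀` is the unique
minimizer of `‖X‖_{k,2}^⋆ − ‖X‖_F` over `{X : 𝒜 X = b}`. -/
theorem unique_minimizer_diff {m n p k : ℕ} (hk1 : 1 ≤ k) (hk : k ≤ min m n)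
    (𝒜 : Matrix (Fin m) (Fin n) ℝ →ₗ[ℝ] EuclideanSpace ℝ (Fin p))
    (hδ : ∃ δ : ℝ, δ < 1 ∧ HasRIP 𝒜 (2 * k) δ)
    (b : EuclideanSpace ℝ (Fin p)) (hb : b ≠ 0)
    (X₀ : Matrix (Fin m) (Fin n) ℝ) (hA : 𝒜 X₀ = b) (hr : X₀.rank ≤ k) :
    ∀ X : Matrix (Fin m) (Fin n) ℝ, 𝒜 X = b → X ≠ X₀ →
      kyFan2Dual k X₀ - frobNorm X₀ < kyFan2Dual k X - frobNorm X := by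
  intro X hX hne
  obtain ⟨δ, hδ1, hRIP⟩ := hδ
  have hkn : k ≤ n := le_trans hk (min_le_right _ _)
  have hn : 0 < n := lt_of_lt_of_le hk1 hkn
  have hrX : k < X.rank := by
    by_contra hle
    push_neg at hle
    have hsub : (X - X₀).rank ≤ 2 * k :=
      le_trans (KFAux.rank_sub_le X X₀) (by omega)
    have h := (hRIP (X - X₀) hsub).1
    have hzero : 𝒜 (X - X₀) = 0 := by rw [map_sub, hX, hA, sub_self]
    rw [hzero, norm_zero] at h
    have hfn0 : 0 ≤ frobNorm (X - X₀) := KFAux.frobNorm_nonneg _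
    have hfn : frobNorm (X - X₀) = 0 := by nlinarith
    have : X - X₀ = 0 := KFAux.frobNorm_eq_zero hfn
    exact hne (sub_eq_zero.mp this)
  have hXne : X ≠ 0 := by
    intro h0
    rw [h0, Matrix.rank_zero] at hrX
    omega
  have hkn' : k < n := lt_of_lt_of_le hrX (Matrix.rank_le_width X)
  have h1 : kyFan2Dual k X₀ ≤ frobNorm X₀ := KFAux.dual_le_frobNorm hk1 hkn hr
  set s := kyFan2 k X with hs_def
  have hs : 0 < s := KFAux.kyFan2_pos hn hk1 hXne
  have hslt : s < frobNorm X := KFAux.kyFan2_lt_frobNorm hkn' hrX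
  have hY : kyFan2 k (s⁻¹ • X) = 1 := by
    rw [KFAux.kyFan2_smul _ (inv_nonneg.mpr hs.le), ← hs_def, inv_mul_cancel₀ hs.ne']
  have h2 : frobInner X (s⁻¹ • X) ≤ kyFan2Dual k X :=
    KFAux.le_kyFan2Dual X (s⁻¹ • X) hn hk1 (le_of_eq hY)
  rw [KFAux.frobInner_smul_self] at h2
  have hfX : 0 < frobNorm X := KFAux.frobNorm_pos hXne
  have h3 : s * frobNorm X < frobNorm X ^ 2 := by nlinarith
  have h4 : frobNorm X < s⁻¹ * frobNorm X ^ 2 := by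
    calc frobNorm X = s⁻¹ * (s * frobNorm X) := by field_simp
      _ < s⁻¹ * frobNorm X ^ 2 := by
          exact mul_lt_mul_of_pos_left h3 (inv_pos.mpr hs)
  linarith
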